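/- The greedy algorithm for hitting a set of intervals — process intervals in increasing order of right endpoint, and whenever the current interval is not yet hit, add its right endpoint to the hitting set — produces a hitting set of minimum cardinality. -/

import Mathlib

/-- The greedy interval-hitting algorithm: process intervals in order; whenever the
current interval `[l, r]` is not yet hit by the accumulated set `H`, add its right
endpoint `r` to `H`. -/
noncomputable def greedyHit (H : Finset ℤ) : List (ℤ × ℤ) → Finset ℤ
  | [] => H
  | (l, r) :: rest =>
      if ((Finset.Icc l r).filter (· ∈ H)).Nonempty then greedyHit H rest
      else greedyHit (insert r H) rest

lemma subset_greedyHit (H : Finset ℤ) (I : List (ℤ × ℤ)) : H ⊆ greedyHit H I := by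
  induction I generalizing H with
  | nil => simp [greedyHit]
  | cons p rest ih =>
    obtain ⟨l, r⟩ := p
    simp only [greedyHit]
    split
    · exact ih H
    · exact (Finset.subset_insert r H).trans (ih _)

lemma greedyHit_hits (H : Finset ℤ) (I : List (ℤ × ℤ)) (hI : ∀ p ∈ I, p.1 ≤ p.2) :
    ∀ p ∈ I, ∃ x ∈ greedyHit H I, p.1 ≤ x ∧ x ≤ p.2 := by
  induction I generalizing H with
  | nil => simp
  | cons q rest ih =>
    obtain ⟨l, r⟩ := q
    intro p hp
    simp only [greedyHit]
    split
    · rename_i h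
      rcases List.mem_cons.mp hp with hp | hp
      · subst hp
        obtain ⟨x, hx⟩ := h
        simp only [Finset.mem_filter, Finset.mem_Icc] at hx
        exact ⟨x, subset_greedyHit H rest hx.2, hx.1.1, hx.1.2⟩
      · exact ih H (fun q hq => hI q (List.mem_cons_of_mem _ hq)) p hp
    · rcases List.mem_cons.mp hp with hp | hp
      · subst hp
        exact ⟨r, subset_greedyHit _ rest (Finset.mem_insert_self r H),
          hI (l, r) (List.mem_cons_self), le_refl r⟩
      · exact ih _ (fun q hq => hI q (List.mem_cons_of_mem _ hq)) p hp

lemma greedyHit_card_le (I : List (ℤ × ℤ)) (hI : ∀ p ∈ I, p.1 ≤ p.2)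
    (hsorted : I.Pairwise (fun p q => p.2 ≤ q.2)) :
    ∀ H : Finset ℤ, (∀ x ∈ H, ∀ p ∈ I, x ≤ p.2) →
    ∀ H' : Finset ℤ, (∀ p ∈ I, ∃ x ∈ H', p.1 ≤ x ∧ x ≤ p.2) →
    (greedyHit H I).card ≤ H.card + (H'.filter (fun x => ∀ y ∈ H, y < x)).card := by
  induction I with
  | nil => intro H _ H' _; simp [greedyHit]
  | cons q rest ih =>
    obtain ⟨l, r⟩ := q
    intro H hH H' hH'
    have hlr : l ≤ r := hI (l, r) (List.mem_cons_self)
    have hrest_sorted : rest.Pairwise (fun p q => p.2 ≤ q.2) := hsorted.of_cons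
    have hr_rest : ∀ p ∈ rest, r ≤ p.2 := fun p hp => (List.pairwise_cons.mp hsorted).1 p hp
    have hI_rest : ∀ p ∈ rest, p.1 ≤ p.2 := fun p hp => hI p (List.mem_cons_of_mem _ hp)
    have hH'_rest : ∀ p ∈ rest, ∃ x ∈ H', p.1 ≤ x ∧ x ≤ p.2 :=
      fun p hp => hH' p (List.mem_cons_of_mem _ hp)
    simp only [greedyHit]
    split
    · exact ih hI_rest hrest_sorted H
        (fun x hx p hp => hH x hx p (List.mem_cons_of_mem _ hp)) H' hH'_rest
    · rename_i hmiss
      -- H misses [l, r] entirely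
      have hmiss' : ∀ y ∈ H, y ∉ Finset.Icc l r := by
        intro y hy hyIcc
        exact hmiss ⟨y, Finset.mem_filter.mpr ⟨hyIcc, hy⟩⟩
      have hHlt : ∀ y ∈ H, y < l := by
        intro y hy
        have hyr : y ≤ r := hH y hy (l, r) (List.mem_cons_self)
        have := hmiss' y hy
        simp only [Finset.mem_Icc, not_and, not_le] at this
        by_contra h
        push_neg at h
        exact absurd (this h) (not_lt.mpr hyr)
      have hrH : r ∉ H := fun h => (hHlt r h).not_ge hlr
      -- hypothesis for the recursive call
      have hH2 : ∀ x ∈ insert r H, ∀ p ∈ rest, x ≤ p.2 := by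
        intro x hx p hp
        rcases Finset.mem_insert.mp hx with h | h
        · exact h ▸ hr_rest p hp
        · exact hH x h p (List.mem_cons_of_mem _ hp)
      have key := ih hI_rest hrest_sorted (insert r H) hH2 H' hH'_rest
      -- H' hits [l, r] with some x0, and x0 > all of H
      obtain ⟨x0, hx0H', hx0l, hx0r⟩ := hH' (l, r) (List.mem_cons_self)
      have hx0P : x0 ∈ H'.filter (fun x => ∀ y ∈ H, y < x) :=
        Finset.mem_filter.mpr ⟨hx0H', fun y hy => lt_of_lt_of_le (hHlt y hy) hx0l⟩
      -- filter wrt (insert r H) ⊆ filter wrt H minus x0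
      have hsub : insert x0 (H'.filter (fun x => ∀ y ∈ insert r H, y < x)) ⊆
          H'.filter (fun x => ∀ y ∈ H, y < x) := by
        intro x hx
        rcases Finset.mem_insert.mp hx with h | h
        · exact h ▸ hx0P
        · obtain ⟨hxH', hxP⟩ := Finset.mem_filter.mp h
          exact Finset.mem_filter.mpr ⟨hxH',
            fun y hy => hxP y (Finset.mem_insert_of_mem hy)⟩
      have hx0not : x0 ∉ H'.filter (fun x => ∀ y ∈ insert r H, y < x) := by
        intro h
        have := (Finset.mem_filter.mp h).2 r (Finset.mem_insert_self r H)
        exact this.not_ge hx0r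
      have hcard : (H'.filter (fun x => ∀ y ∈ insert r H, y < x)).card + 1 ≤
          (H'.filter (fun x => ∀ y ∈ H, y < x)).card := by
        calc (H'.filter (fun x => ∀ y ∈ insert r H, y < x)).card + 1
            = (insert x0 (H'.filter (fun x => ∀ y ∈ insert r H, y < x))).card := by
              rw [Finset.card_insert_of_notMem hx0not]
          _ ≤ _ := Finset.card_le_card hsub
      have hins : (insert r H).card = H.card + 1 := Finset.card_insert_of_notMem hrH
      omega

/-- The greedy algorithm, run on a finite list of intervals sorted by increasing
right endpoint, produces a hitting set of minimum cardinality. -/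
theorem greedy_hitting_set_minimal
    (I : List (ℤ × ℤ)) (hI : ∀ p ∈ I, p.1 ≤ p.2)
    (hsorted : I.Pairwise (fun p q => p.2 ≤ q.2)) :
    (∀ p ∈ I, ∃ x ∈ greedyHit ∅ I, p.1 ≤ x ∧ x ≤ p.2) ∧
    (∀ H' : Finset ℤ, (∀ p ∈ I, ∃ x ∈ H', p.1 ≤ x ∧ x ≤ p.2) →
      (greedyHit ∅ I).card ≤ H'.card) := by
  refine ⟨greedyHit_hits ∅ I hI, fun H' hH' => ?_⟩
  have := greedyHit_card_le I hI hsorted ∅ (by simp) H' hH'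
  simp only [Finset.card_empty, zero_add, Finset.notMem_empty] at this
  exact this.trans (Finset.card_le_card (Finset.filter_subset _ _))
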